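/- Let 𝒞 be a pointed (i.e. admitting a zero object) finitely complete majority category, and let f : X → Z and g : Y → Z admit a cooperator, i.e. a morphism φ : X × Y → Z with φ ∘ ⟨1_X, 0⟩ = f and φ ∘ ⟨0, 1_Y⟩ = g. Then the square whose vertex is ker(f) × ker(g), whose two legs are the composite ker(f) × ker(g) → ker(f) → X (first projection followed by the kernel inclusion of f) and the composite ker(f) × ker(g) → ker(g) → Y (second projection followed by the kernel inclusion of g), and whose other two sides are f : X → Z and g : Y → Z, is a pullback square. -/

import Mathlib

open CategoryTheory CategoryTheory.Limits

/-- The triple of morphisms `(a, b, c)` is related by the ternary relation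
`(r₁, r₂, r₃)`. -/
def TernaryRelated {C : Type*} [Category C] {R A B D S : C}
    (r₁ : R ⟶ A) (r₂ : R ⟶ B) (r₃ : R ⟶ D) (a : S ⟶ A) (b : S ⟶ B) (c : S ⟶ D) : Prop :=
  ∃ f : S ⟶ R, f ≫ r₁ = a ∧ f ≫ r₂ = b ∧ f ≫ r₃ = c

/-- A category is a majority category when every (jointly monomorphic) internal ternary
relation is strictly closed with respect to the majority matrix. -/
def IsMajorityCategory (C : Type*) [Category C] : Prop :=
  ∀ ⦃A B D R : C⦄ (r₁ : R ⟶ A) (r₂ : R ⟶ B) (r₃ : R ⟶ D),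
    (∀ ⦃S : C⦄ (f g : S ⟶ R),
      f ≫ r₁ = g ≫ r₁ → f ≫ r₂ = g ≫ r₂ → f ≫ r₃ = g ≫ r₃ → f = g) →
    ∀ ⦃S : C⦄ (a₁ a₂ : S ⟶ A) (b₁ b₂ : S ⟶ B) (c₁ c₂ : S ⟶ D),
      TernaryRelated r₁ r₂ r₃ a₁ b₁ c₂ →
      TernaryRelated r₁ r₂ r₃ a₁ b₂ c₁ →
      TernaryRelated r₁ r₂ r₃ a₂ b₁ c₁ →
      TernaryRelated r₁ r₂ r₃ a₁ b₁ c₁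

/-- In a pointed finitely complete majority category, if `f : X ⟶ Z` and `g : Y ⟶ Z`
admit a cooperator, then the square with vertex `ker f ⨯ ker g`, legs the composites of
the product projections with the kernel inclusions, and sides `f` and `g`, is a pullback. -/
theorem cooperator_pullback {C : Type*} [Category C] [HasZeroObject C] [HasZeroMorphisms C]
    [HasFiniteLimits C] (hmaj : IsMajorityCategory C) {X Y Z : C} (f : X ⟶ Z) (g : Y ⟶ Z)
    (hcoop : ∃ φ : X ⨯ Y ⟶ Z, prod.lift (𝟙 X) 0 ≫ φ = f ∧ prod.lift 0 (𝟙 Y) ≫ φ = g) :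
    IsPullback ((prod.fst : kernel f ⨯ kernel g ⟶ kernel f) ≫ kernel.ι f)
      ((prod.snd : kernel f ⨯ kernel g ⟶ kernel g) ≫ kernel.ι g) f g := by
  obtain ⟨φ, hf, hg⟩ := hcoop
  -- key step: any cone over (f, g) has both composites zero
  have key : ∀ {S : C} (s : S ⟶ X) (t : S ⟶ Y), s ≫ f = t ≫ g → s ≫ f = 0 := by
    intro S s t hst
    have jm : ∀ ⦃S' : C⦄ (u v : S' ⟶ X ⨯ Y), u ≫ prod.fst = v ≫ prod.fst →
        u ≫ prod.snd = v ≫ prod.snd → u ≫ φ = v ≫ φ → u = v := by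
      intro S' u v h1 h2 _
      exact prod.hom_ext h1 h2
    have h1 : TernaryRelated (prod.fst : X ⨯ Y ⟶ X) prod.snd φ
        (0 : S ⟶ X) (0 : S ⟶ Y) (0 : S ⟶ Z) :=
      ⟨0, by simp, by simp, by simp⟩
    have h2 : TernaryRelated (prod.fst : X ⨯ Y ⟶ X) prod.snd φ (0 : S ⟶ X) t (s ≫ f) := by
      refine ⟨prod.lift 0 t, by simp [prod.lift_fst, prod.lift_snd, prod.lift_fst_assoc, prod.lift_snd_assoc], by simp [prod.lift_fst, prod.lift_snd, prod.lift_fst_assoc, prod.lift_snd_assoc], ?_⟩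
      have e : prod.lift (0 : S ⟶ X) t = t ≫ prod.lift 0 (𝟙 Y) := by
        apply Limits.prod.hom_ext <;> simp
      rw [e, Category.assoc, hg, hst]
    have h3 : TernaryRelated (prod.fst : X ⨯ Y ⟶ X) prod.snd φ s (0 : S ⟶ Y) (s ≫ f) := by
      refine ⟨prod.lift s 0, by simp [prod.lift_fst, prod.lift_snd, prod.lift_fst_assoc, prod.lift_snd_assoc], by simp [prod.lift_fst, prod.lift_snd, prod.lift_fst_assoc, prod.lift_snd_assoc], ?_⟩
      have e : prod.lift s (0 : S ⟶ Y) = s ≫ prod.lift (𝟙 X) 0 := by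
        apply Limits.prod.hom_ext <;> simp
      rw [e, Category.assoc, hf]
    obtain ⟨h, e1, e2, e3⟩ := hmaj prod.fst prod.snd φ jm 0 s 0 t (s ≫ f) 0 h1 h2 h3
    have hz : h = 0 := prod.hom_ext (by simp [e1]) (by simp [e2])
    rw [← e3, hz, zero_comp]
  have comm : ((prod.fst : kernel f ⨯ kernel g ⟶ kernel f) ≫ kernel.ι f) ≫ f =
      ((prod.snd : kernel f ⨯ kernel g ⟶ kernel g) ≫ kernel.ι g) ≫ g := by
    simp [kernel.condition]
  refine IsPullback.of_isLimit (PullbackCone.IsLimit.mk comm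
    (fun sc => prod.lift (kernel.lift f sc.fst (key sc.fst sc.snd sc.condition))
      (kernel.lift g sc.snd (by rw [← sc.condition]; exact key sc.fst sc.snd sc.condition)))
    (fun sc => by simp [prod.lift_fst, prod.lift_snd, prod.lift_fst_assoc, prod.lift_snd_assoc]) (fun sc => by simp [prod.lift_fst, prod.lift_snd, prod.lift_fst_assoc, prod.lift_snd_assoc]) ?_)
  intro sc m hm1 hm2
  apply Limits.prod.hom_ext
  · rw [← cancel_mono (kernel.ι f)]
    simpa [prod.lift_fst, prod.lift_snd, prod.lift_fst_assoc, prod.lift_snd_assoc] using hm1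
  · rw [← cancel_mono (kernel.ι g)]
    simpa [prod.lift_fst, prod.lift_snd, prod.lift_fst_assoc, prod.lift_snd_assoc] using hm2
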